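/- Suppose μ, ν are compactly supported probability measures on ℝ and the cost function is c(x,y,x',y') = f(x,y) g(x',y') where f and g are quadratic polynomials in two variables. Then there exists λ ∈ [0,1] such that π_x^λ = λ π_com + (1−λ) π_ant is a minimizer of the quadratic-form transport cost over Π(μ,ν). Moreover, if μ and ν are not degenerate (not point masses), then for every λ ∈ [0,1] there exist quadratic polynomials f, g such that π_x^λ minimizes the quadratic-form transport cost with cost f(x,y)g(x',y') uniquely among the family (π_x^λ)_{λ∈[0,1]}. -/

import Mathlib

open MeasureTheory Set Filter Topology

noncomputable section

/-- `π` is a coupling of `μ` and `ν`, i.e. an element of `Π(μ,ν)`. -/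
def IsCouplingOf {X Y : Type*} [MeasurableSpace X] [MeasurableSpace Y]
    (π : Measure (X × Y)) (μ : Measure X) (ν : Measure Y) : Prop :=
  π.map Prod.fst = μ ∧ π.map Prod.snd = ν

/-- The quadratic-form transport cost `∬ c dπ ⊗ dπ`. -/
def qotCost {X Y : Type*} [MeasurableSpace X] [MeasurableSpace Y]
    (c : X × Y → X × Y → ℝ) (π : Measure (X × Y)) : ℝ :=
  ∫ z, (∫ z', c z z' ∂π) ∂π

/-- `π` is a minimizer of the QOT problem with cost `c` and marginals `μ, ν`. -/
def IsQOTMinimizer {X Y : Type*} [MeasurableSpace X] [MeasurableSpace Y]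
    (c : X × Y → X × Y → ℝ) (μ : Measure X) (ν : Measure Y)
    (π : Measure (X × Y)) : Prop :=
  IsProbabilityMeasure π ∧ IsCouplingOf π μ ν ∧
    ∀ π' : Measure (X × Y), IsProbabilityMeasure π' → IsCouplingOf π' μ ν →
      qotCost c π ≤ qotCost c π'

/-- `π` is a maximizer of the QOT problem with cost `c` and marginals `μ, ν`. -/
def IsQOTMaximizer {X Y : Type*} [MeasurableSpace X] [MeasurableSpace Y]
    (c : X × Y → X × Y → ℝ) (μ : Measure X) (ν : Measure Y)
    (π : Measure (X × Y)) : Prop :=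
  IsProbabilityMeasure π ∧ IsCouplingOf π μ ν ∧
    ∀ π' : Measure (X × Y), IsProbabilityMeasure π' → IsCouplingOf π' μ ν →
      qotCost c π' ≤ qotCost c π

/-- The left quantile function of a measure on `ℝ`. -/
def qtl (μ : Measure ℝ) (t : ℝ) : ℝ :=
  sInf {x : ℝ | ENNReal.ofReal t ≤ μ (Iic x)}

/-- The uniform distribution on `[0,1]`. -/
def unif01 : Measure ℝ := volume.restrict (Icc 0 1)

/-- The comonotone coupling of `μ` and `ν`. -/
def pCom (μ ν : Measure ℝ) : Measure (ℝ × ℝ) :=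
  unif01.map fun u => (qtl μ u, qtl ν u)

/-- The antimonotone coupling of `μ` and `ν`. -/
def pAnt (μ ν : Measure ℝ) : Measure (ℝ × ℝ) :=
  unif01.map fun u => (qtl μ u, qtl ν (1 - u))

/-- The mixture `π_x^λ = λ π_com + (1-λ) π_ant` (an X-transport for `λ ∈ (0,1)`). -/
def pXmix (μ ν : Measure ℝ) (l : ℝ) : Measure (ℝ × ℝ) :=
  ENNReal.ofReal l • pCom μ ν + ENNReal.ofReal (1 - l) • pAnt μ ν

/-- A quadratic polynomial in two real variables. -/
def IsQuadratic2 (f : ℝ → ℝ → ℝ) : Prop :=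
  ∃ a b c d e k : ℝ, ∀ x y : ℝ,
    f x y = a + b * x + c * y + d * x ^ 2 + e * y ^ 2 + k * x * y

section AuxDev

namespace QOTAux

open ENNReal

/-! ### unif01 basics -/

lemma unif01_apply {s : Set ℝ} (hs : MeasurableSet s) : unif01 s = volume (s ∩ Icc 0 1) :=
  Measure.restrict_apply hs

instance : IsProbabilityMeasure unif01 :=
  ⟨by simp [unif01, Real.volume_Icc]⟩

lemma vol_inter_Icc_eq (S : Set ℝ) :
    volume (S ∩ Icc (0:ℝ) 1) = volume (S ∩ Ioo (0:ℝ) 1) := by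
  refine le_antisymm ?_ (measure_mono (inter_subset_inter_right _ Ioo_subset_Icc_self))
  have hsub : S ∩ Icc (0:ℝ) 1 ⊆ (S ∩ Ioo 0 1) ∪ ({0, 1} : Set ℝ) := by
    rintro u ⟨huS, hu0, hu1⟩
    by_cases h : u ∈ Ioo (0:ℝ) 1
    · exact Or.inl ⟨huS, h⟩
    · right
      rcases eq_or_lt_of_le hu0 with h0 | h0
      · exact Or.inl h0.symm
      · rcases eq_or_lt_of_le hu1 with h1 | h1
        · exact Or.inr h1
        · exact absurd ⟨h0, h1⟩ h
  calc volume (S ∩ Icc (0:ℝ) 1) ≤ volume ((S ∩ Ioo 0 1) ∪ ({0,1} : Set ℝ)) := measure_mono hsub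
    _ ≤ volume (S ∩ Ioo 0 1) + volume ({0,1} : Set ℝ) := measure_union_le _ _
    _ = volume (S ∩ Ioo 0 1) := by
        have h01 : volume ({0,1} : Set ℝ) = 0 := by
          rw [Set.insert_eq]
          refine le_antisymm (le_trans (measure_union_le _ _) ?_) zero_le
          simp
        rw [h01, add_zero]

lemma ae_unif01_mem_Ioo : ∀ᵐ u ∂unif01, u ∈ Ioo (0:ℝ) 1 := by
  rw [ae_iff]
  have h : {u : ℝ | ¬ u ∈ Ioo (0:ℝ) 1} = (Ioo (0:ℝ) 1)ᶜ := rfl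
  rw [h, unif01_apply measurableSet_Ioo.compl, vol_inter_Icc_eq]
  simp

lemma measurable_one_sub : Measurable (fun u : ℝ => 1 - u) :=
  measurable_const.sub measurable_id

lemma unif01_map_one_sub : unif01.map (fun u : ℝ => 1 - u) = unif01 := by
  have hmp : MeasurePreserving (fun u : ℝ => 1 - u) volume volume :=
    Measure.measurePreserving_sub_left volume 1
  refine Measure.ext fun s hs => ?_
  rw [Measure.map_apply measurable_one_sub hs, unif01_apply (measurable_one_sub hs),
    unif01_apply hs]
  have hpre : (fun u : ℝ => 1 - u) ⁻¹' s ∩ Icc 0 1 = (fun u : ℝ => 1 - u) ⁻¹' (s ∩ Icc 0 1) := by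
    ext u
    simp only [mem_inter_iff, mem_preimage, mem_Icc]
    constructor
    · rintro ⟨h1, h2, h3⟩; exact ⟨h1, by linarith, by linarith⟩
    · rintro ⟨h1, h2, h3⟩; exact ⟨h1, by linarith, by linarith⟩
  rw [hpre, hmp.measure_preimage (hs.inter measurableSet_Icc).nullMeasurableSet]

/-! ### cdf facts -/

variable {μ ν : Measure ℝ} {m M : ℝ}

lemma cdf_zero_of_lt (hsupp : μ (Icc m M)ᶜ = 0) {x : ℝ} (hx : x < m) : μ (Iic x) = 0 := by
  refine measure_mono_null (fun y hy => ?_) hsupp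
  simp only [mem_Iic] at hy
  simp only [mem_compl_iff, mem_Icc, not_and_or, not_le]
  exact Or.inl (lt_of_le_of_lt hy hx)

lemma meas_Icc_one [IsProbabilityMeasure μ] (hsupp : μ (Icc m M)ᶜ = 0) : μ (Icc m M) = 1 := by
  have h := measure_add_measure_compl (μ := μ) (measurableSet_Icc (a := m) (b := M))
  rwa [hsupp, add_zero, measure_univ] at h

lemma cdf_one_of_ge [IsProbabilityMeasure μ] (hsupp : μ (Icc m M)ᶜ = 0) {x : ℝ} (hx : M ≤ x) :
    μ (Iic x) = 1 := by
  refine le_antisymm prob_le_one ?_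
  calc (1:ℝ≥0∞) = μ (Icc m M) := (meas_Icc_one hsupp).symm
    _ ≤ μ (Iic x) := measure_mono (fun y hy => mem_Iic.2 (le_trans hy.2 hx))

lemma cdf_right_lim (μ : Measure ℝ) [IsFiniteMeasure μ] (x : ℝ) :
    Tendsto (fun n : ℕ => μ (Iic (x + 1/((n:ℝ)+1)))) atTop (𝓝 (μ (Iic x))) := by
  have hiInter : ⋂ n : ℕ, Iic (x + 1/((n:ℝ)+1)) = Iic x := by
    ext y
    simp only [mem_iInter, mem_Iic]
    constructor
    · intro h
      by_contra hy
      push_neg at hy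
      obtain ⟨n, hn⟩ := exists_nat_one_div_lt (sub_pos.2 hy)
      have := h n
      linarith
    · intro h n
      have h0 : (0:ℝ) < 1/((n:ℝ)+1) := by positivity
      linarith
  have hanti : Antitone (fun n : ℕ => Iic (x + 1/((n:ℝ)+1))) := by
    intro a b hab
    apply Iic_subset_Iic.2
    have hc : ((a:ℝ)+1) ≤ ((b:ℝ)+1) := by exact_mod_cast Nat.succ_le_succ hab
    have : 1/((b:ℝ)+1) ≤ 1/((a:ℝ)+1) := one_div_le_one_div_of_le (by positivity) hc
    linarith
  have h := tendsto_measure_iInter_atTop (μ := μ)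
    (fun n => measurableSet_Iic.nullMeasurableSet) hanti ⟨0, measure_ne_top μ _⟩
  rw [hiInter] at h
  exact h

/-! ### quantile facts -/

section qtlSec
variable [IsProbabilityMeasure μ]

lemma qtl_S_mem_ge (hsupp : μ (Icc m M)ᶜ = 0) {t : ℝ} (ht : 0 < t) {y : ℝ}
    (hy : ENNReal.ofReal t ≤ μ (Iic y)) : m ≤ y := by
  by_contra hc
  push_neg at hc
  rw [cdf_zero_of_lt hsupp hc] at hy
  exact (ENNReal.ofReal_pos.2 ht).not_ge hy

lemma qtl_S_M_mem (hsupp : μ (Icc m M)ᶜ = 0) {t : ℝ} (ht : t ∈ Ioc (0:ℝ) 1) :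
    ENNReal.ofReal t ≤ μ (Iic M) := by
  rw [cdf_one_of_ge hsupp le_rfl]
  exact ENNReal.ofReal_le_one.2 ht.2

lemma qtl_le_iff (hsupp : μ (Icc m M)ᶜ = 0) {t x : ℝ} (ht : t ∈ Ioc (0:ℝ) 1) :
    qtl μ t ≤ x ↔ ENNReal.ofReal t ≤ μ (Iic x) := by
  have hne : {y : ℝ | ENNReal.ofReal t ≤ μ (Iic y)}.Nonempty := ⟨M, qtl_S_M_mem hsupp ht⟩
  have hbdd : BddBelow {y : ℝ | ENNReal.ofReal t ≤ μ (Iic y)} :=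
    ⟨m, fun y hy => qtl_S_mem_ge hsupp ht.1 hy⟩
  constructor
  · intro h
    have key : ∀ n : ℕ, ENNReal.ofReal t ≤ μ (Iic (x + 1/((n:ℝ)+1))) := by
      intro n
      have hlt : qtl μ t < x + 1/((n:ℝ)+1) :=
        lt_of_le_of_lt h (lt_add_of_pos_right _ (by positivity))
      obtain ⟨y, hyS, hy⟩ := (csInf_lt_iff hbdd hne).1 hlt
      exact le_trans hyS (measure_mono (Iic_subset_Iic.2 hy.le))
    exact ge_of_tendsto' (cdf_right_lim μ x) key
  · intro h
    exact csInf_le hbdd h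

lemma qtl_mem_Icc (hsupp : μ (Icc m M)ᶜ = 0) (hm : m ≤ M) {t : ℝ} (ht : t ∈ Ioc (0:ℝ) 1) :
    qtl μ t ∈ Icc m M := by
  constructor
  · exact le_csInf ⟨M, qtl_S_M_mem hsupp ht⟩ (fun y hy => qtl_S_mem_ge hsupp ht.1 hy)
  · exact (qtl_le_iff hsupp ht).2 (qtl_S_M_mem hsupp ht)

lemma qtl_mono (hsupp : μ (Icc m M)ᶜ = 0) {a b : ℝ} (ha : a ∈ Ioc (0:ℝ) 1)
    (hb : b ∈ Ioc (0:ℝ) 1) (hab : a ≤ b) : qtl μ a ≤ qtl μ b := by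
  rw [qtl_le_iff hsupp ha]
  exact le_trans (ENNReal.ofReal_le_ofReal hab) ((qtl_le_iff hsupp hb).1 le_rfl)

end qtlSec

/-! ### Monotone extension of the quantile function -/

def Qext (μ : Measure ℝ) (m M : ℝ) : ℝ → ℝ := fun u =>
  if u ≤ 0 then m else if 1 < u then M else qtl μ u

lemma Qext_eq {u : ℝ} (hu : u ∈ Ioc (0:ℝ) 1) : Qext μ m M u = qtl μ u := by
  simp [Qext, not_le.2 hu.1, not_lt.2 hu.2]

section QextSec
variable [IsProbabilityMeasure μ]

lemma Qext_mem (hsupp : μ (Icc m M)ᶜ = 0) (hm : m ≤ M) (u : ℝ) : Qext μ m M u ∈ Icc m M := by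
  unfold Qext
  split_ifs with h1 h2
  · exact ⟨le_rfl, hm⟩
  · exact ⟨hm, le_rfl⟩
  · exact qtl_mem_Icc hsupp hm ⟨not_le.1 h1, not_lt.1 h2⟩

lemma Qext_mono (hsupp : μ (Icc m M)ᶜ = 0) (hm : m ≤ M) : Monotone (Qext μ m M) := by
  intro a b hab
  by_cases ha0 : a ≤ 0
  · have h : Qext μ m M a = m := by simp [Qext, ha0]
    rw [h]; exact (Qext_mem hsupp hm b).1
  · have hb0 : ¬ b ≤ 0 := fun h => ha0 (hab.trans h)
    by_cases hb1 : 1 < b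
    · have h : Qext μ m M b = M := by simp [Qext, hb0, hb1]
      rw [h]; exact (Qext_mem hsupp hm a).2
    · have ha1 : ¬ 1 < a := fun h => hb1 (lt_of_lt_of_le h hab)
      rw [Qext_eq ⟨not_le.1 ha0, not_lt.1 ha1⟩, Qext_eq ⟨not_le.1 hb0, not_lt.1 hb1⟩]
      exact qtl_mono hsupp ⟨not_le.1 ha0, not_lt.1 ha1⟩ ⟨not_le.1 hb0, not_lt.1 hb1⟩ hab

lemma Qext_measurable (hsupp : μ (Icc m M)ᶜ = 0) (hm : m ≤ M) : Measurable (Qext μ m M) :=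
  (Qext_mono hsupp hm).measurable

lemma Qext_le_iff (hsupp : μ (Icc m M)ᶜ = 0) {u x : ℝ} (hu : u ∈ Ioc (0:ℝ) 1) :
    Qext μ m M u ≤ x ↔ u ≤ (μ (Iic x)).toReal := by
  rw [Qext_eq hu, qtl_le_iff hsupp hu,
    ENNReal.ofReal_le_iff_le_toReal (measure_ne_top μ (Iic x))]

lemma Qext_gt_iff (hsupp : μ (Icc m M)ᶜ = 0) {u x : ℝ} (hu : u ∈ Ioc (0:ℝ) 1) :
    x < Qext μ m M u ↔ (μ (Iic x)).toReal < u :=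
  lt_iff_lt_of_le_iff_le (Qext_le_iff hsupp hu)

lemma map_Qext (hsupp : μ (Icc m M)ᶜ = 0) (hm : m ≤ M) : unif01.map (Qext μ m M) = μ := by
  refine Measure.ext_of_Iic _ _ fun x => ?_
  rw [Measure.map_apply (Qext_measurable hsupp hm) measurableSet_Iic,
    unif01_apply ((Qext_measurable hsupp hm) measurableSet_Iic), vol_inter_Icc_eq]
  have hF1 : (μ (Iic x)).toReal ≤ 1 := by
    have h := ENNReal.toReal_mono (ENNReal.one_ne_top) (prob_le_one (μ := μ) (s := Iic x))
    simpa using h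
  have hsub1 : Ioo (0:ℝ) ((μ (Iic x)).toReal) ⊆ Qext μ m M ⁻¹' Iic x ∩ Ioo 0 1 := by
    rintro u ⟨hu0, huF⟩
    have hu1 : u < 1 := lt_of_lt_of_le huF hF1
    exact ⟨(Qext_le_iff hsupp ⟨hu0, hu1.le⟩).2 huF.le, hu0, hu1⟩
  have hsub2 : Qext μ m M ⁻¹' Iic x ∩ Ioo 0 1 ⊆ Ioc 0 ((μ (Iic x)).toReal) := by
    rintro u ⟨hu, hu0, hu1⟩
    exact ⟨hu0, (Qext_le_iff hsupp ⟨hu0, hu1.le⟩).1 hu⟩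
  have key : volume (Qext μ m M ⁻¹' Iic x ∩ Ioo 0 1) = ENNReal.ofReal ((μ (Iic x)).toReal) := by
    apply le_antisymm
    · calc volume (Qext μ m M ⁻¹' Iic x ∩ Ioo 0 1) ≤ volume (Ioc (0:ℝ) ((μ (Iic x)).toReal)) :=
          measure_mono hsub2
        _ = ENNReal.ofReal ((μ (Iic x)).toReal) := by rw [Real.volume_Ioc, sub_zero]
    · calc ENNReal.ofReal ((μ (Iic x)).toReal)
          = volume (Ioo (0:ℝ) ((μ (Iic x)).toReal)) := by rw [Real.volume_Ioo, sub_zero]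
        _ ≤ volume (Qext μ m M ⁻¹' Iic x ∩ Ioo 0 1) := measure_mono hsub1
  rw [key, ENNReal.ofReal_toReal (measure_ne_top μ _)]

end QextSec

end QOTAux

end AuxDev

namespace QOTAux

open ENNReal

variable {μ ν : Measure ℝ} {m M : ℝ} [IsProbabilityMeasure μ] [IsProbabilityMeasure ν]

/-! ### The couplings -/

lemma pair_measurable (hsμ : μ (Icc m M)ᶜ = 0) (hsν : ν (Icc m M)ᶜ = 0) (hm : m ≤ M) :
    Measurable (fun u => (Qext μ m M u, Qext ν m M u)) :=
  (Qext_measurable hsμ hm).prodMk (Qext_measurable hsν hm)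

lemma pair_measurable' (hsμ : μ (Icc m M)ᶜ = 0) (hsν : ν (Icc m M)ᶜ = 0) (hm : m ≤ M) :
    Measurable (fun u => (Qext μ m M u, Qext ν m M (1 - u))) :=
  (Qext_measurable hsμ hm).prodMk ((Qext_measurable hsν hm).comp measurable_one_sub)

lemma pCom_eq (hsμ : μ (Icc m M)ᶜ = 0) (hsν : ν (Icc m M)ᶜ = 0) :
    pCom μ ν = unif01.map (fun u => (Qext μ m M u, Qext ν m M u)) := by
  refine Measure.map_congr (ae_unif01_mem_Ioo.mono fun u hu => ?_)
  have hu' : u ∈ Ioc (0:ℝ) 1 := ⟨hu.1, hu.2.le⟩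
  show (qtl μ u, qtl ν u) = (Qext μ m M u, Qext ν m M u)
  rw [Qext_eq hu', Qext_eq hu']

lemma pAnt_eq (hsμ : μ (Icc m M)ᶜ = 0) (hsν : ν (Icc m M)ᶜ = 0) :
    pAnt μ ν = unif01.map (fun u => (Qext μ m M u, Qext ν m M (1 - u))) := by
  refine Measure.map_congr (ae_unif01_mem_Ioo.mono fun u hu => ?_)
  have hu' : u ∈ Ioc (0:ℝ) 1 := ⟨hu.1, hu.2.le⟩
  have hu'' : 1 - u ∈ Ioc (0:ℝ) 1 := ⟨by simp [hu.2], by linarith [hu.1]⟩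
  show (qtl μ u, qtl ν (1 - u)) = (Qext μ m M u, Qext ν m M (1 - u))
  rw [Qext_eq hu', Qext_eq hu'']

lemma isProb_pCom (hm : m ≤ M) (hsμ : μ (Icc m M)ᶜ = 0) (hsν : ν (Icc m M)ᶜ = 0) :
    IsProbabilityMeasure (pCom μ ν) := by
  rw [pCom_eq hsμ hsν]
  exact Measure.isProbabilityMeasure_map (pair_measurable hsμ hsν hm).aemeasurable

lemma isProb_pAnt (hm : m ≤ M) (hsμ : μ (Icc m M)ᶜ = 0) (hsν : ν (Icc m M)ᶜ = 0) :
    IsProbabilityMeasure (pAnt μ ν) := by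
  rw [pAnt_eq hsμ hsν]
  exact Measure.isProbabilityMeasure_map (pair_measurable' hsμ hsν hm).aemeasurable

lemma isCoupling_pCom (hm : m ≤ M) (hsμ : μ (Icc m M)ᶜ = 0) (hsν : ν (Icc m M)ᶜ = 0) :
    IsCouplingOf (pCom μ ν) μ ν := by
  constructor
  · rw [pCom_eq hsμ hsν, Measure.map_map measurable_fst (pair_measurable hsμ hsν hm)]
    exact map_Qext hsμ hm
  · rw [pCom_eq hsμ hsν, Measure.map_map measurable_snd (pair_measurable hsμ hsν hm)]
    exact map_Qext hsν hm

lemma isCoupling_pAnt (hm : m ≤ M) (hsμ : μ (Icc m M)ᶜ = 0) (hsν : ν (Icc m M)ᶜ = 0) :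
    IsCouplingOf (pAnt μ ν) μ ν := by
  constructor
  · rw [pAnt_eq hsμ hsν, Measure.map_map measurable_fst (pair_measurable' hsμ hsν hm)]
    exact map_Qext hsμ hm
  · rw [pAnt_eq hsμ hsν, Measure.map_map measurable_snd (pair_measurable' hsμ hsν hm)]
    show unif01.map ((Qext ν m M) ∘ (fun u : ℝ => 1 - u)) = ν
    rw [← Measure.map_map (Qext_measurable hsν hm) measurable_one_sub, unif01_map_one_sub,
      map_Qext hsν hm]

lemma ofReal_add_ofReal_one_sub {l : ℝ} (hl : l ∈ Icc (0:ℝ) 1) :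
    ENNReal.ofReal l + ENNReal.ofReal (1 - l) = 1 := by
  rw [← ENNReal.ofReal_add hl.1 (by linarith [hl.2]), show l + (1-l) = 1 by ring,
    ENNReal.ofReal_one]

lemma isProb_pXmix (hm : m ≤ M) (hsμ : μ (Icc m M)ᶜ = 0) (hsν : ν (Icc m M)ᶜ = 0)
    {l : ℝ} (hl : l ∈ Icc (0:ℝ) 1) : IsProbabilityMeasure (pXmix μ ν l) := by
  haveI := isProb_pCom hm hsμ hsν
  haveI := isProb_pAnt hm hsμ hsν
  constructor
  rw [pXmix, Measure.add_apply, Measure.smul_apply, Measure.smul_apply, measure_univ,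
    measure_univ, smul_eq_mul, smul_eq_mul, mul_one, mul_one]
  exact ofReal_add_ofReal_one_sub hl

lemma isCoupling_pXmix (hm : m ≤ M) (hsμ : μ (Icc m M)ᶜ = 0) (hsν : ν (Icc m M)ᶜ = 0)
    {l : ℝ} (hl : l ∈ Icc (0:ℝ) 1) : IsCouplingOf (pXmix μ ν l) μ ν := by
  have hc := isCoupling_pCom hm hsμ hsν
  have ha := isCoupling_pAnt hm hsμ hsν
  constructor
  · rw [pXmix, Measure.map_add _ _ measurable_fst, Measure.map_smul, Measure.map_smul,
      hc.1, ha.1, ← add_smul, ofReal_add_ofReal_one_sub hl, one_smul]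
  · rw [pXmix, Measure.map_add _ _ measurable_snd, Measure.map_smul, Measure.map_smul,
      hc.2, ha.2, ← add_smul, ofReal_add_ofReal_one_sub hl, one_smul]

/-! ### Generic coupling facts -/

variable {π : Measure (ℝ × ℝ)}

lemma coupling_fst_apply (hπ : IsCouplingOf π μ ν) {A : Set ℝ} (hA : MeasurableSet A) :
    π (A ×ˢ univ) = μ A := by
  rw [← hπ.1, Measure.map_apply measurable_fst hA, prod_univ]

lemma coupling_snd_apply (hπ : IsCouplingOf π μ ν) {B : Set ℝ} (hB : MeasurableSet B) :
    π (univ ×ˢ B) = ν B := by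
  rw [← hπ.2, Measure.map_apply measurable_snd hB, univ_prod]

lemma coupling_null (hsμ : μ (Icc m M)ᶜ = 0) (hsν : ν (Icc m M)ᶜ = 0)
    (hπ : IsCouplingOf π μ ν) : π ((Icc m M ×ˢ Icc m M)ᶜ) = 0 := by
  have hsub : (Icc m M ×ˢ Icc m M)ᶜ ⊆ ((Icc m M)ᶜ ×ˢ univ) ∪ (univ ×ˢ (Icc m M)ᶜ) := by
    intro z hz
    simp only [mem_compl_iff, mem_prod, not_and_or, mem_union, mem_univ, and_true,
      true_and] at hz ⊢
    exact hz
  refine le_antisymm ?_ zero_le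
  calc π ((Icc m M ×ˢ Icc m M)ᶜ) ≤ π (((Icc m M)ᶜ ×ˢ univ) ∪ (univ ×ˢ (Icc m M)ᶜ)) :=
      measure_mono hsub
    _ ≤ π ((Icc m M)ᶜ ×ˢ univ) + π (univ ×ˢ (Icc m M)ᶜ) := measure_union_le _ _
    _ = 0 := by
        rw [coupling_fst_apply hπ measurableSet_Icc.compl,
          coupling_snd_apply hπ measurableSet_Icc.compl, hsμ, hsν, add_zero]

lemma coupling_ae_mem (hsμ : μ (Icc m M)ᶜ = 0) (hsν : ν (Icc m M)ᶜ = 0)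
    (hπ : IsCouplingOf π μ ν) : ∀ᵐ z ∂π, z ∈ Icc m M ×ˢ Icc m M := by
  rw [ae_iff]
  have h : {z : ℝ × ℝ | ¬ z ∈ Icc m M ×ˢ Icc m M} = (Icc m M ×ˢ Icc m M)ᶜ := rfl
  rw [h]
  exact coupling_null hsμ hsν hπ

lemma coupling_integrable (hsμ : μ (Icc m M)ᶜ = 0) (hsν : ν (Icc m M)ᶜ = 0)
    (hπ : IsCouplingOf π μ ν) [IsProbabilityMeasure π] {φ : ℝ × ℝ → ℝ} (hφ : Measurable φ)
    {C : ℝ} (hC : ∀ z ∈ Icc m M ×ˢ Icc m M, |φ z| ≤ C) : Integrable φ π :=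
  ⟨hφ.aestronglyMeasurable,
    HasFiniteIntegral.of_bounded ((coupling_ae_mem hsμ hsν hπ).mono fun z hz => by
      simpa [Real.norm_eq_abs] using hC z hz)⟩

lemma integral_fst_eq (hπ : IsCouplingOf π μ ν) {φ : ℝ → ℝ} (hφ : AEStronglyMeasurable φ μ) :
    ∫ z, φ z.1 ∂π = ∫ x, φ x ∂μ := by
  have h := integral_map (μ := π) (φ := Prod.fst) measurable_fst.aemeasurable
    (f := φ) (by rw [hπ.1]; exact hφ)
  rw [hπ.1] at h
  exact h.symm

lemma integral_snd_eq (hπ : IsCouplingOf π μ ν) {φ : ℝ → ℝ} (hφ : AEStronglyMeasurable φ ν) :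
    ∫ z, φ z.2 ∂π = ∫ y, φ y ∂ν := by
  have h := integral_map (μ := π) (φ := Prod.snd) measurable_snd.aemeasurable
    (f := φ) (by rw [hπ.2]; exact hφ)
  rw [hπ.2] at h
  exact h.symm

lemma abs_le_R {x : ℝ} (hx : x ∈ Icc m M) : |x| ≤ max |m| |M| := by
  rw [abs_le]
  constructor
  · calc -(max |m| |M|) ≤ -|m| := neg_le_neg (le_max_left _ _)
      _ ≤ m := neg_abs_le m
      _ ≤ x := hx.1
  · calc x ≤ M := hx.2
      _ ≤ |M| := le_abs_self M
      _ ≤ max |m| |M| := le_max_right _ _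

lemma int_x (hsμ : μ (Icc m M)ᶜ = 0) (hsν : ν (Icc m M)ᶜ = 0)
    (hπ : IsCouplingOf π μ ν) [IsProbabilityMeasure π] :
    Integrable (fun z : ℝ × ℝ => z.1) π :=
  coupling_integrable hsμ hsν hπ measurable_fst (C := max |m| |M|) fun z hz => abs_le_R hz.1

lemma int_y (hsμ : μ (Icc m M)ᶜ = 0) (hsν : ν (Icc m M)ᶜ = 0)
    (hπ : IsCouplingOf π μ ν) [IsProbabilityMeasure π] :
    Integrable (fun z : ℝ × ℝ => z.2) π :=
  coupling_integrable hsμ hsν hπ measurable_snd (C := max |m| |M|) fun z hz => abs_le_R hz.2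

lemma int_x2 (hsμ : μ (Icc m M)ᶜ = 0) (hsν : ν (Icc m M)ᶜ = 0)
    (hπ : IsCouplingOf π μ ν) [IsProbabilityMeasure π] :
    Integrable (fun z : ℝ × ℝ => z.1 ^ 2) π :=
  coupling_integrable hsμ hsν hπ (measurable_fst.pow_const 2) (C := (max |m| |M|) ^ 2)
    fun z hz => by
      rw [abs_pow]
      exact pow_le_pow_left₀ (abs_nonneg _) (abs_le_R hz.1) 2

lemma int_y2 (hsμ : μ (Icc m M)ᶜ = 0) (hsν : ν (Icc m M)ᶜ = 0)
    (hπ : IsCouplingOf π μ ν) [IsProbabilityMeasure π] :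
    Integrable (fun z : ℝ × ℝ => z.2 ^ 2) π :=
  coupling_integrable hsμ hsν hπ (measurable_snd.pow_const 2) (C := (max |m| |M|) ^ 2)
    fun z hz => by
      rw [abs_pow]
      exact pow_le_pow_left₀ (abs_nonneg _) (abs_le_R hz.2) 2

lemma int_xy (hsμ : μ (Icc m M)ᶜ = 0) (hsν : ν (Icc m M)ᶜ = 0)
    (hπ : IsCouplingOf π μ ν) [IsProbabilityMeasure π] :
    Integrable (fun z : ℝ × ℝ => z.1 * z.2) π :=
  coupling_integrable hsμ hsν hπ (measurable_fst.mul measurable_snd)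
    (C := (max |m| |M|) * (max |m| |M|)) fun z hz => by
      rw [abs_mul]
      exact mul_le_mul (abs_le_R hz.1) (abs_le_R hz.2) (abs_nonneg _)
        (le_trans (abs_nonneg _) (abs_le_R hz.1))

lemma integral_quadratic (hsμ : μ (Icc m M)ᶜ = 0) (hsν : ν (Icc m M)ᶜ = 0)
    (hπ : IsCouplingOf π μ ν) [IsProbabilityMeasure π] (a b c d e k : ℝ) :
    ∫ z, (a + b * z.1 + c * z.2 + d * z.1 ^ 2 + e * z.2 ^ 2 + k * (z.1 * z.2)) ∂π
      = (a + b * (∫ x, x ∂μ) + c * (∫ y, y ∂ν) + d * (∫ x, x ^ 2 ∂μ) + e * (∫ y, y ^ 2 ∂ν))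
        + k * (∫ z, z.1 * z.2 ∂π) := by
  have i1 := int_x hsμ hsν hπ
  have i2 := int_y hsμ hsν hπ
  have i3 := int_x2 hsμ hsν hπ
  have i4 := int_y2 hsμ hsν hπ
  have i5 := int_xy hsμ hsν hπ
  have e1 : ∫ z : ℝ × ℝ, z.1 ∂π = ∫ x, x ∂μ :=
    integral_fst_eq hπ aestronglyMeasurable_id
  have e2 : ∫ z : ℝ × ℝ, z.2 ∂π = ∫ y, y ∂ν :=
    integral_snd_eq hπ aestronglyMeasurable_id
  have e3 : ∫ z : ℝ × ℝ, z.1 ^ 2 ∂π = ∫ x, x ^ 2 ∂μ :=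
    integral_fst_eq hπ (measurable_id.pow_const 2).aestronglyMeasurable
  have e4 : ∫ z : ℝ × ℝ, z.2 ^ 2 ∂π = ∫ y, y ^ 2 ∂ν :=
    integral_snd_eq hπ (measurable_id.pow_const 2).aestronglyMeasurable
  have j1 : Integrable (fun z : ℝ × ℝ => a + b * z.1) π :=
    (integrable_const a).add (i1.const_mul b)
  have j2 : Integrable (fun z : ℝ × ℝ => a + b * z.1 + c * z.2) π :=
    j1.add (i2.const_mul c)
  have j3 : Integrable (fun z : ℝ × ℝ => a + b * z.1 + c * z.2 + d * z.1 ^ 2) π :=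
    j2.add (i3.const_mul d)
  have j4 : Integrable (fun z : ℝ × ℝ => a + b * z.1 + c * z.2 + d * z.1 ^ 2 + e * z.2 ^ 2) π :=
    j3.add (i4.const_mul e)
  rw [integral_add j4 (i5.const_mul k),
    integral_add j3 (i4.const_mul e),
    integral_add j2 (i3.const_mul d),
    integral_add j1 (i2.const_mul c),
    integral_add (integrable_const a) (i1.const_mul b),
    integral_const, integral_const_mul, integral_const_mul, integral_const_mul,
    integral_const_mul, integral_const_mul, e1, e2, e3, e4]
  simp [measure_univ]

lemma qotCost_factor (F G : ℝ × ℝ → ℝ) (π : Measure (ℝ × ℝ)) :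
    qotCost (fun z z' => F z * G z') π = (∫ z, F z ∂π) * (∫ z, G z ∂π) := by
  unfold qotCost
  simp_rw [integral_const_mul]
  rw [integral_mul_const]

end QOTAux
namespace QOTAux

open ENNReal

variable {μ ν : Measure ℝ} {m M : ℝ} [IsProbabilityMeasure μ] [IsProbabilityMeasure ν]
variable {π : Measure (ℝ × ℝ)}

/-! ### Section measures -/

lemma meas_Ioi_eq (μ : Measure ℝ) [IsProbabilityMeasure μ] (x : ℝ) :
    μ (Ioi x) = ENNReal.ofReal (1 - (μ (Iic x)).toReal) := by
  have h1 : μ (Ioi x) = 1 - μ (Iic x) := by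
    rw [← compl_Iic, measure_compl measurableSet_Iic (measure_ne_top _ _), measure_univ]
  rw [h1, ENNReal.ofReal_sub _ ENNReal.toReal_nonneg, ENNReal.ofReal_one,
    ENNReal.ofReal_toReal (measure_ne_top μ _)]

lemma ofReal_mono : Monotone ENNReal.ofReal := fun _ _ h => ENNReal.ofReal_le_ofReal h

lemma pCom_sect (hm : m ≤ M) (hsμ : μ (Icc m M)ᶜ = 0) (hsν : ν (Icc m M)ᶜ = 0) (s t : ℝ) :
    pCom μ ν (Ioi s ×ˢ Ioi t) = min (μ (Ioi s)) (ν (Ioi t)) := by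
  rw [pCom_eq hsμ hsν,
    Measure.map_apply (pair_measurable hsμ hsν hm) (measurableSet_Ioi.prod measurableSet_Ioi),
    unif01_apply ((pair_measurable hsμ hsν hm) (measurableSet_Ioi.prod measurableSet_Ioi)),
    vol_inter_Icc_eq]
  have ha0 : 0 ≤ (μ (Iic s)).toReal := ENNReal.toReal_nonneg
  have hb0 : 0 ≤ (ν (Iic t)).toReal := ENNReal.toReal_nonneg
  have hset : (fun u => (Qext μ m M u, Qext ν m M u)) ⁻¹' (Ioi s ×ˢ Ioi t) ∩ Ioo 0 1
      = Ioo (max ((μ (Iic s)).toReal) ((ν (Iic t)).toReal)) 1 := by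
    ext u
    simp only [mem_inter_iff, mem_preimage, mem_prod, mem_Ioi, mem_Ioo, max_lt_iff]
    constructor
    · rintro ⟨⟨h1, h2⟩, h3, h4⟩
      exact ⟨⟨(Qext_gt_iff hsμ ⟨h3, h4.le⟩).1 h1, (Qext_gt_iff hsν ⟨h3, h4.le⟩).1 h2⟩, h4⟩
    · rintro ⟨⟨h1, h2⟩, h4⟩
      have h3 : 0 < u := lt_of_le_of_lt ha0 h1
      exact ⟨⟨(Qext_gt_iff hsμ ⟨h3, h4.le⟩).2 h1, (Qext_gt_iff hsν ⟨h3, h4.le⟩).2 h2⟩, h3, h4⟩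
  rw [hset, Real.volume_Ioo]
  have hminmax : 1 - max ((μ (Iic s)).toReal) ((ν (Iic t)).toReal)
      = min (1 - (μ (Iic s)).toReal) (1 - (ν (Iic t)).toReal) := by
    rcases le_total ((μ (Iic s)).toReal) ((ν (Iic t)).toReal) with h | h
    · rw [max_eq_right h, min_eq_right (by linarith)]
    · rw [max_eq_left h, min_eq_left (by linarith)]
  rw [hminmax, ofReal_mono.map_min, meas_Ioi_eq, meas_Ioi_eq]

lemma pAnt_sect (hm : m ≤ M) (hsμ : μ (Icc m M)ᶜ = 0) (hsν : ν (Icc m M)ᶜ = 0) (s t : ℝ) :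
    pAnt μ ν (Ioi s ×ˢ Ioi t)
      = ENNReal.ofReal (1 - (μ (Iic s)).toReal - (ν (Iic t)).toReal) := by
  rw [pAnt_eq hsμ hsν,
    Measure.map_apply (pair_measurable' hsμ hsν hm) (measurableSet_Ioi.prod measurableSet_Ioi),
    unif01_apply ((pair_measurable' hsμ hsν hm) (measurableSet_Ioi.prod measurableSet_Ioi)),
    vol_inter_Icc_eq]
  have ha0 : 0 ≤ (μ (Iic s)).toReal := ENNReal.toReal_nonneg
  have hb0 : 0 ≤ (ν (Iic t)).toReal := ENNReal.toReal_nonneg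
  have hset : (fun u => (Qext μ m M u, Qext ν m M (1 - u))) ⁻¹' (Ioi s ×ˢ Ioi t) ∩ Ioo 0 1
      = Ioo ((μ (Iic s)).toReal) (1 - (ν (Iic t)).toReal) := by
    ext u
    simp only [mem_inter_iff, mem_preimage, mem_prod, mem_Ioi, mem_Ioo]
    constructor
    · rintro ⟨⟨h1, h2⟩, h3, h4⟩
      have h1' := (Qext_gt_iff hsμ ⟨h3, h4.le⟩).1 h1
      have hu'' : 1 - u ∈ Ioc (0:ℝ) 1 := ⟨by linarith, by linarith⟩
      have h2' := (Qext_gt_iff hsν hu'').1 h2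
      exact ⟨h1', by linarith⟩
    · rintro ⟨h1, h2⟩
      have h3 : 0 < u := lt_of_le_of_lt ha0 h1
      have h4 : u < 1 := by linarith
      have hu'' : 1 - u ∈ Ioc (0:ℝ) 1 := ⟨by linarith, by linarith⟩
      exact ⟨⟨(Qext_gt_iff hsμ ⟨h3, h4.le⟩).2 h1, (Qext_gt_iff hsν hu'').2 (by linarith)⟩, h3, h4⟩
  rw [hset, Real.volume_Ioo, show 1 - (ν (Iic t)).toReal - (μ (Iic s)).toReal
    = 1 - (μ (Iic s)).toReal - (ν (Iic t)).toReal by ring]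

lemma sect_le_fst (hπ : IsCouplingOf π μ ν) (s t : ℝ) :
    π (Ioi s ×ˢ Ioi t) ≤ μ (Ioi s) := by
  rw [← coupling_fst_apply hπ measurableSet_Ioi]
  exact measure_mono (prod_mono_right (subset_univ _))

lemma sect_le_snd (hπ : IsCouplingOf π μ ν) (s t : ℝ) :
    π (Ioi s ×ˢ Ioi t) ≤ ν (Ioi t) := by
  rw [← coupling_snd_apply hπ measurableSet_Ioi]
  exact measure_mono (prod_mono_left (subset_univ _))

lemma fst_le_sect_add (hπ : IsCouplingOf π μ ν) (s t : ℝ) :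
    μ (Ioi s) ≤ π (Ioi s ×ˢ Ioi t) + ν (Iic t) := by
  rw [← coupling_fst_apply hπ measurableSet_Ioi, ← coupling_snd_apply hπ measurableSet_Iic]
  refine le_trans (measure_mono ?_) (measure_union_le _ _)
  rintro ⟨x, y⟩ ⟨hx, -⟩
  by_cases hy : t < y
  · exact Or.inl ⟨hx, hy⟩
  · exact Or.inr ⟨mem_univ _, not_lt.1 hy⟩

lemma pAnt_sect_le (hm : m ≤ M) (hsμ : μ (Icc m M)ᶜ = 0) (hsν : ν (Icc m M)ᶜ = 0)
    (hπ : IsCouplingOf π μ ν) (s t : ℝ) :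
    pAnt μ ν (Ioi s ×ˢ Ioi t) ≤ π (Ioi s ×ˢ Ioi t) := by
  rw [pAnt_sect hm hsμ hsν s t]
  rcases le_or_gt (1 - (μ (Iic s)).toReal - (ν (Iic t)).toReal) 0 with h | h
  · rw [ENNReal.ofReal_eq_zero.2 h]
    exact zero_le
  · have h2 := fst_le_sect_add hπ s t
    rw [meas_Ioi_eq] at h2
    rw [show ν (Iic t) = ENNReal.ofReal ((ν (Iic t)).toReal) from
      (ENNReal.ofReal_toReal (measure_ne_top ν _)).symm] at h2
    have h3 : ENNReal.ofReal (1 - (μ (Iic s)).toReal - (ν (Iic t)).toReal)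
        + ENNReal.ofReal ((ν (Iic t)).toReal)
        ≤ π (Ioi s ×ˢ Ioi t) + ENNReal.ofReal ((ν (Iic t)).toReal) := by
      rw [← ENNReal.ofReal_add h.le ENNReal.toReal_nonneg,
        show 1 - (μ (Iic s)).toReal - (ν (Iic t)).toReal + (ν (Iic t)).toReal
          = 1 - (μ (Iic s)).toReal by ring]
      exact h2
    exact (ENNReal.add_le_add_iff_right ENNReal.ofReal_ne_top).1 h3

lemma sect_le_pCom (hm : m ≤ M) (hsμ : μ (Icc m M)ᶜ = 0) (hsν : ν (Icc m M)ᶜ = 0)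
    (hπ : IsCouplingOf π μ ν) (s t : ℝ) :
    π (Ioi s ×ˢ Ioi t) ≤ pCom μ ν (Ioi s ×ˢ Ioi t) := by
  rw [pCom_sect hm hsμ hsν s t]
  exact le_min (sect_le_fst hπ s t) (sect_le_snd hπ s t)

/-! ### The double-integral functional -/

def Jl (π : Measure (ℝ × ℝ)) (m : ℝ) : ℝ≥0∞ :=
  ∫⁻ z, ENNReal.ofReal (z.1 - m) * ENNReal.ofReal (z.2 - m) ∂π

def rhoP (m M : ℝ) : Measure (ℝ × ℝ) :=
  (volume.restrict (Ioo m M)).prod (volume.restrict (Ioo m M))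

instance (m M : ℝ) : IsFiniteMeasure (volume.restrict (Ioo m M)) :=
  ⟨by rw [Measure.restrict_apply_univ, Real.volume_Ioo]; exact ENNReal.ofReal_lt_top⟩

instance (m M : ℝ) : IsFiniteMeasure (rhoP m M) := by unfold rhoP; infer_instance

lemma Usect_measurable :
    MeasurableSet {w : (ℝ × ℝ) × (ℝ × ℝ) | w.2.1 < w.1.1 ∧ w.2.2 < w.1.2} :=
  MeasurableSet.inter
    (measurableSet_lt (measurable_fst.comp measurable_snd) (measurable_fst.comp measurable_fst))
    (measurableSet_lt (measurable_snd.comp measurable_snd) (measurable_snd.comp measurable_fst))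

lemma Jl_eq (hm : m ≤ M) (hsμ : μ (Icc m M)ᶜ = 0) (hsν : ν (Icc m M)ᶜ = 0)
    (hπ : IsCouplingOf π μ ν) [IsProbabilityMeasure π] :
    Jl π m = ∫⁻ p, π (Ioi p.1 ×ˢ Ioi p.2) ∂(rhoP m M) := by
  set U := {w : (ℝ × ℝ) × (ℝ × ℝ) | w.2.1 < w.1.1 ∧ w.2.2 < w.1.2} with hU
  have hUm : MeasurableSet U := Usect_measurable
  have step1 : ∀ᵐ z ∂π, ENNReal.ofReal (z.1 - m) * ENNReal.ofReal (z.2 - m)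
      = ∫⁻ p, U.indicator 1 (z, p) ∂(rhoP m M) := by
    refine (coupling_ae_mem hsμ hsν hπ).mono fun z hz => ?_
    have h1 : ∫⁻ p, U.indicator 1 (z, p) ∂(rhoP m M)
        = ∫⁻ p, (Iio z.1 ×ˢ Iio z.2).indicator 1 p ∂(rhoP m M) := by
      refine lintegral_congr fun p => ?_
      simp only [hU, indicator_apply, mem_setOf_eq, mem_prod, mem_Iio, Pi.one_apply]
    rw [h1, lintegral_indicator_one (measurableSet_Iio.prod measurableSet_Iio), rhoP,
      Measure.prod_prod]
    have hz1 : (volume.restrict (Ioo m M)) (Iio z.1) = ENNReal.ofReal (z.1 - m) := by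
      rw [Measure.restrict_apply measurableSet_Iio]
      have he : Iio z.1 ∩ Ioo m M = Ioo m z.1 := by
        ext u
        simp only [mem_inter_iff, mem_Iio, mem_Ioo]
        constructor
        · rintro ⟨h1, h2, h3⟩; exact ⟨h2, h1⟩
        · rintro ⟨h1, h2⟩; exact ⟨h2, h1, lt_of_lt_of_le h2 hz.1.2⟩
      rw [he, Real.volume_Ioo]
    have hz2 : (volume.restrict (Ioo m M)) (Iio z.2) = ENNReal.ofReal (z.2 - m) := by
      rw [Measure.restrict_apply measurableSet_Iio]
      have he : Iio z.2 ∩ Ioo m M = Ioo m z.2 := by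
        ext u
        simp only [mem_inter_iff, mem_Iio, mem_Ioo]
        constructor
        · rintro ⟨h1, h2, h3⟩; exact ⟨h2, h1⟩
        · rintro ⟨h1, h2⟩; exact ⟨h2, h1, lt_of_lt_of_le h2 hz.2.2⟩
      rw [he, Real.volume_Ioo]
    rw [hz1, hz2]
  calc Jl π m = ∫⁻ z, ∫⁻ p, U.indicator 1 (z, p) ∂(rhoP m M) ∂π := lintegral_congr_ae step1
    _ = ∫⁻ p, ∫⁻ z, U.indicator 1 (z, p) ∂π ∂(rhoP m M) := by
        exact lintegral_lintegral_swap ((measurable_one.indicator hUm).aemeasurable)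
    _ = ∫⁻ p, π (Ioi p.1 ×ˢ Ioi p.2) ∂(rhoP m M) := by
        refine lintegral_congr fun p => ?_
        have h2 : ∫⁻ z, U.indicator 1 (z, p) ∂π
            = ∫⁻ z, (Ioi p.1 ×ˢ Ioi p.2).indicator 1 z ∂π := by
          refine lintegral_congr fun z => ?_
          simp only [hU, indicator_apply, mem_setOf_eq, mem_prod, mem_Ioi, Pi.one_apply]
        rw [h2, lintegral_indicator_one (measurableSet_Ioi.prod measurableSet_Ioi)]

lemma shift_integrable (hsμ : μ (Icc m M)ᶜ = 0) (hsν : ν (Icc m M)ᶜ = 0)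
    (hπ : IsCouplingOf π μ ν) [IsProbabilityMeasure π] :
    Integrable (fun z : ℝ × ℝ => (z.1 - m) * (z.2 - m)) π := by
  refine coupling_integrable hsμ hsν hπ
    ((measurable_fst.sub measurable_const).mul (measurable_snd.sub measurable_const))
    (C := (M - m) * (M - m)) fun z hz => ?_
  obtain ⟨hz1, hz2⟩ := hz
  rw [abs_mul, abs_of_nonneg (by linarith [hz1.1] : (0:ℝ) ≤ z.1 - m),
    abs_of_nonneg (by linarith [hz2.1] : (0:ℝ) ≤ z.2 - m)]
  exact mul_le_mul (by linarith [hz1.2]) (by linarith [hz2.2]) (by linarith [hz2.1])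
    (by linarith [hz1.1, hz1.2])

lemma shift_nonneg_ae (hsμ : μ (Icc m M)ᶜ = 0) (hsν : ν (Icc m M)ᶜ = 0)
    (hπ : IsCouplingOf π μ ν) :
    0 ≤ᵐ[π] fun z : ℝ × ℝ => (z.1 - m) * (z.2 - m) :=
  (coupling_ae_mem hsμ hsν hπ).mono fun z hz =>
    mul_nonneg (by linarith [hz.1.1]) (by linarith [hz.2.1])

lemma Jl_eq_ofReal (hsμ : μ (Icc m M)ᶜ = 0) (hsν : ν (Icc m M)ᶜ = 0)
    (hπ : IsCouplingOf π μ ν) [IsProbabilityMeasure π] :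
    Jl π m = ENNReal.ofReal (∫ z, (z.1 - m) * (z.2 - m) ∂π) := by
  rw [ofReal_integral_eq_lintegral_ofReal (shift_integrable hsμ hsν hπ)
    (shift_nonneg_ae hsμ hsν hπ)]
  refine lintegral_congr_ae ((coupling_ae_mem hsμ hsν hπ).mono fun z hz => ?_)
  show ENNReal.ofReal (z.1 - m) * ENNReal.ofReal (z.2 - m)
      = ENNReal.ofReal ((z.1 - m) * (z.2 - m))
  exact (ENNReal.ofReal_mul (by linarith [hz.1.1] : (0:ℝ) ≤ z.1 - m)).symm

lemma integral_shift (hsμ : μ (Icc m M)ᶜ = 0) (hsν : ν (Icc m M)ᶜ = 0)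
    (hπ : IsCouplingOf π μ ν) [IsProbabilityMeasure π] :
    ∫ z, (z.1 - m) * (z.2 - m) ∂π
      = (∫ z, z.1 * z.2 ∂π) - m * (∫ x, x ∂μ) - m * (∫ y, y ∂ν) + m * m := by
  have hcong : ∫ z, (z.1 - m) * (z.2 - m) ∂π
      = ∫ z, (m * m + (-m) * z.1 + (-m) * z.2 + 0 * z.1 ^ 2 + 0 * z.2 ^ 2 + 1 * (z.1 * z.2)) ∂π :=
    integral_congr_ae (Filter.Eventually.of_forall fun z => by ring)
  rw [hcong, integral_quadratic hsμ hsν hπ (m * m) (-m) (-m) 0 0 1]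
  ring

lemma I_le_pCom (hm : m ≤ M) (hsμ : μ (Icc m M)ᶜ = 0) (hsν : ν (Icc m M)ᶜ = 0)
    (hπ : IsCouplingOf π μ ν) [IsProbabilityMeasure π] :
    ∫ z, z.1 * z.2 ∂π ≤ ∫ z, z.1 * z.2 ∂(pCom μ ν) := by
  haveI := isProb_pCom hm hsμ hsν
  have hcc := isCoupling_pCom hm hsμ hsν
  have h1 : Jl π m ≤ Jl (pCom μ ν) m := by
    rw [Jl_eq hm hsμ hsν hπ, Jl_eq hm hsμ hsν hcc]
    exact lintegral_mono fun p => sect_le_pCom hm hsμ hsν hπ p.1 p.2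
  rw [Jl_eq_ofReal hsμ hsν hπ, Jl_eq_ofReal hsμ hsν hcc] at h1
  have h0 : 0 ≤ ∫ z, (z.1 - m) * (z.2 - m) ∂(pCom μ ν) :=
    integral_nonneg_of_ae (shift_nonneg_ae hsμ hsν hcc)
  have h2 := (ENNReal.ofReal_le_ofReal_iff h0).1 h1
  rw [integral_shift hsμ hsν hπ, integral_shift hsμ hsν hcc] at h2
  linarith

lemma pAnt_le_I (hm : m ≤ M) (hsμ : μ (Icc m M)ᶜ = 0) (hsν : ν (Icc m M)ᶜ = 0)
    (hπ : IsCouplingOf π μ ν) [IsProbabilityMeasure π] :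
    ∫ z, z.1 * z.2 ∂(pAnt μ ν) ≤ ∫ z, z.1 * z.2 ∂π := by
  haveI := isProb_pAnt hm hsμ hsν
  have hca := isCoupling_pAnt hm hsμ hsν
  have h1 : Jl (pAnt μ ν) m ≤ Jl π m := by
    rw [Jl_eq hm hsμ hsν hπ, Jl_eq hm hsμ hsν hca]
    exact lintegral_mono fun p => pAnt_sect_le hm hsμ hsν hπ p.1 p.2
  rw [Jl_eq_ofReal hsμ hsν hπ, Jl_eq_ofReal hsμ hsν hca] at h1
  have h0 : 0 ≤ ∫ z, (z.1 - m) * (z.2 - m) ∂π :=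
    integral_nonneg_of_ae (shift_nonneg_ae hsμ hsν hπ)
  have h2 := (ENNReal.ofReal_le_ofReal_iff h0).1 h1
  rw [integral_shift hsμ hsν hπ, integral_shift hsμ hsν hca] at h2
  linarith

lemma I_pXmix (hm : m ≤ M) (hsμ : μ (Icc m M)ᶜ = 0) (hsν : ν (Icc m M)ᶜ = 0)
    {l : ℝ} (hl : l ∈ Icc (0:ℝ) 1) :
    ∫ z, z.1 * z.2 ∂(pXmix μ ν l)
      = l * (∫ z, z.1 * z.2 ∂(pCom μ ν)) + (1 - l) * (∫ z, z.1 * z.2 ∂(pAnt μ ν)) := by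
  haveI := isProb_pCom hm hsμ hsν
  haveI := isProb_pAnt hm hsμ hsν
  have hic : Integrable (fun z : ℝ × ℝ => z.1 * z.2) (pCom μ ν) :=
    int_xy hsμ hsν (isCoupling_pCom hm hsμ hsν)
  have hia : Integrable (fun z : ℝ × ℝ => z.1 * z.2) (pAnt μ ν) :=
    int_xy hsμ hsν (isCoupling_pAnt hm hsμ hsν)
  rw [pXmix, integral_add_measure (hic.smul_measure ENNReal.ofReal_ne_top)
      (hia.smul_measure ENNReal.ofReal_ne_top),
    integral_smul_measure, integral_smul_measure, ENNReal.toReal_ofReal hl.1,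
    ENNReal.toReal_ofReal (by linarith [hl.2] : (0:ℝ) ≤ 1 - l), smul_eq_mul, smul_eq_mul]

end QOTAux
namespace QOTAux

open ENNReal

variable {μ ν : Measure ℝ} {m M : ℝ} [IsProbabilityMeasure μ] [IsProbabilityMeasure ν]

/-! ### Nondegeneracy -/

lemma eq_dirac_of_cdf (hsupp : μ (Icc m M)ᶜ = 0)
    (hd : ∀ s : ℝ, μ (Iic s) = 0 ∨ μ (Iic s) = 1) : ∃ x, μ = Measure.dirac x := by
  set T := {s : ℝ | μ (Iic s) = 1} with hT
  have hTne : T.Nonempty := ⟨M, cdf_one_of_ge hsupp le_rfl⟩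
  have hTbdd : BddBelow T := by
    refine ⟨m, fun s hs => ?_⟩
    by_contra hc
    push_neg at hc
    rw [mem_setOf_eq, cdf_zero_of_lt hsupp hc] at hs
    exact zero_ne_one hs
  set x₀ := sInf T with hx₀def
  have hx₀ : μ (Iic x₀) = 1 := by
    have key : ∀ n : ℕ, μ (Iic (x₀ + 1/((n:ℝ)+1))) = 1 := by
      intro n
      have hlt : x₀ < x₀ + 1/((n:ℝ)+1) := lt_add_of_pos_right _ (by positivity)
      obtain ⟨s, hsT, hs⟩ := (csInf_lt_iff hTbdd hTne).1 hlt
      refine le_antisymm prob_le_one ?_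
      calc (1:ℝ≥0∞) = μ (Iic s) := hsT.symm
        _ ≤ μ (Iic (x₀ + 1/((n:ℝ)+1))) := measure_mono (Iic_subset_Iic.2 hs.le)
    have h := cdf_right_lim μ x₀
    simp only [key] at h
    exact tendsto_nhds_unique h tendsto_const_nhds
  refine ⟨x₀, Measure.ext_of_Iic μ (Measure.dirac x₀) fun x => ?_⟩
  rw [Measure.dirac_apply' x₀ measurableSet_Iic]
  rcases le_or_gt x₀ x with h | h
  · rw [indicator_of_mem (mem_Iic.2 h)]
    refine le_antisymm prob_le_one ?_
    calc (1:ℝ≥0∞) = μ (Iic x₀) := hx₀.symm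
      _ ≤ μ (Iic x) := measure_mono (Iic_subset_Iic.2 h)
  · rw [indicator_of_notMem (by simpa using h.not_ge)]
    rcases hd x with h0 | h1
    · exact h0
    · exact absurd (csInf_le hTbdd h1) (not_le.2 h)

lemma exists_middle (hsupp : μ (Icc m M)ᶜ = 0) (hnd : ¬ ∃ x, μ = Measure.dirac x) :
    ∃ s₀ s₁ : ℝ, s₀ < s₁ ∧ 0 < (μ (Iic s₀)).toReal ∧ (μ (Iic s₁)).toReal < 1 := by
  have h1 : ∃ s, μ (Iic s) ≠ 0 ∧ μ (Iic s) ≠ 1 := by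
    by_contra hc
    push_neg at hc
    refine hnd (eq_dirac_of_cdf hsupp fun s => ?_)
    rcases eq_or_ne (μ (Iic s)) 0 with h | h
    · exact Or.inl h
    · exact Or.inr (hc s h)
  obtain ⟨s, hs0, hs1⟩ := h1
  have hlt1 : μ (Iic s) < 1 := lt_of_le_of_ne prob_le_one hs1
  obtain ⟨n, hn⟩ : ∃ n : ℕ, μ (Iic (s + 1/((n:ℝ)+1))) < 1 :=
    ((cdf_right_lim μ s).eventually_lt_const hlt1).exists
  refine ⟨s, s + 1/((n:ℝ)+1), lt_add_of_pos_right _ (by positivity),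
    ENNReal.toReal_pos hs0 (measure_ne_top μ _), ?_⟩
  have h := (ENNReal.toReal_lt_toReal (measure_ne_top μ _) ENNReal.one_ne_top).2 hn
  simpa using h

lemma I_ant_lt_com (hm : m ≤ M) (hsμ : μ (Icc m M)ᶜ = 0) (hsν : ν (Icc m M)ᶜ = 0)
    (hndμ : ¬ ∃ x, μ = Measure.dirac x) (hndν : ¬ ∃ y, ν = Measure.dirac y) :
    ∫ z, z.1 * z.2 ∂(pAnt μ ν) < ∫ z, z.1 * z.2 ∂(pCom μ ν) := by
  haveI := isProb_pCom hm hsμ hsν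
  haveI := isProb_pAnt hm hsμ hsν
  have hCc := isCoupling_pCom hm hsμ hsν
  have hCa := isCoupling_pAnt hm hsμ hsν
  obtain ⟨s₀, s₁, hs01, hα, hβ⟩ := exists_middle hsμ hndμ
  obtain ⟨t₀, t₁, ht01, hα', hβ'⟩ := exists_middle hsν hndν
  have hFμ : ∀ x y : ℝ, x ≤ y → (μ (Iic x)).toReal ≤ (μ (Iic y)).toReal := fun x y h =>
    ENNReal.toReal_mono (measure_ne_top μ _) (measure_mono (Iic_subset_Iic.2 h))
  have hFν : ∀ x y : ℝ, x ≤ y → (ν (Iic x)).toReal ≤ (ν (Iic y)).toReal := fun x y h =>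
    ENNReal.toReal_mono (measure_ne_top ν _) (measure_mono (Iic_subset_Iic.2 h))
  set ε := min (min ((μ (Iic s₀)).toReal) ((ν (Iic t₀)).toReal))
    (min (1 - (μ (Iic s₁)).toReal) (1 - (ν (Iic t₁)).toReal)) with hε_def
  have hε : 0 < ε := lt_min (lt_min hα hα') (lt_min (by linarith) (by linarith))
  have hεa : ε ≤ (μ (Iic s₀)).toReal := le_trans (min_le_left _ _) (min_le_left _ _)
  have hεb : ε ≤ (ν (Iic t₀)).toReal := le_trans (min_le_left _ _) (min_le_right _ _)
  have hεc : ε ≤ 1 - (μ (Iic s₁)).toReal := le_trans (min_le_right _ _) (min_le_left _ _)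
  have hεd : ε ≤ 1 - (ν (Iic t₁)).toReal := le_trans (min_le_right _ _) (min_le_right _ _)
  set R := Ioc s₀ s₁ ×ˢ Ioc t₀ t₁ with hR_def
  have hRmeas : MeasurableSet R := measurableSet_Ioc.prod measurableSet_Ioc
  have hpt : ∀ p : ℝ × ℝ, pAnt μ ν (Ioi p.1 ×ˢ Ioi p.2)
      + R.indicator (fun _ => ENNReal.ofReal ε) p ≤ pCom μ ν (Ioi p.1 ×ˢ Ioi p.2) := by
    intro p
    by_cases hp : p ∈ R
    · rw [indicator_of_mem hp, pAnt_sect hm hsμ hsν, pCom_sect hm hsμ hsν]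
      obtain ⟨⟨hp11, hp12⟩, hp21, hp22⟩ := hp
      have ha1 : (μ (Iic s₀)).toReal ≤ (μ (Iic p.1)).toReal := hFμ _ _ hp11.le
      have ha2 : (μ (Iic p.1)).toReal ≤ (μ (Iic s₁)).toReal := hFμ _ _ hp12
      have hb1 : (ν (Iic t₀)).toReal ≤ (ν (Iic p.2)).toReal := hFν _ _ hp21.le
      have hb2 : (ν (Iic p.2)).toReal ≤ (ν (Iic t₁)).toReal := hFν _ _ hp22
      set a := (μ (Iic p.1)).toReal
      set b := (ν (Iic p.2)).toReal
      have key1 : 1 - a - b ≤ min (1 - a) (1 - b) - ε := by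
        rcases le_total (1 - a) (1 - b) with h | h
        · rw [min_eq_left h]; linarith
        · rw [min_eq_right h]; linarith
      have key2 : 0 ≤ min (1 - a) (1 - b) - ε := by
        rcases le_total (1 - a) (1 - b) with h | h
        · rw [min_eq_left h]; linarith
        · rw [min_eq_right h]; linarith
      calc ENNReal.ofReal (1 - a - b) + ENNReal.ofReal ε
          ≤ ENNReal.ofReal (min (1 - a) (1 - b) - ε) + ENNReal.ofReal ε :=
            add_le_add (ENNReal.ofReal_le_ofReal key1) le_rfl
        _ = ENNReal.ofReal (min (1 - a) (1 - b)) := by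
            rw [← ENNReal.ofReal_add key2 hε.le, sub_add_cancel]
        _ = min (μ (Ioi p.1)) (ν (Ioi p.2)) := by
            rw [ofReal_mono.map_min, ← meas_Ioi_eq, ← meas_Ioi_eq]
    · rw [indicator_of_notMem hp, add_zero]
      exact pAnt_sect_le hm hsμ hsν hCc p.1 p.2
  have hineq : Jl (pAnt μ ν) m + ENNReal.ofReal ε * rhoP m M R ≤ Jl (pCom μ ν) m := by
    rw [Jl_eq hm hsμ hsν hCa, Jl_eq hm hsμ hsν hCc]
    calc (∫⁻ p, pAnt μ ν (Ioi p.1 ×ˢ Ioi p.2) ∂(rhoP m M)) + ENNReal.ofReal ε * rhoP m M R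
        = ∫⁻ p, (pAnt μ ν (Ioi p.1 ×ˢ Ioi p.2)
            + R.indicator (fun _ => ENNReal.ofReal ε) p) ∂(rhoP m M) := by
          rw [lintegral_add_right _ (measurable_const.indicator hRmeas),
            lintegral_indicator_const hRmeas]
      _ ≤ ∫⁻ p, pCom μ ν (Ioi p.1 ×ˢ Ioi p.2) ∂(rhoP m M) := lintegral_mono hpt
  have hms₀ : m ≤ s₀ := by
    by_contra hc
    push_neg at hc
    rw [cdf_zero_of_lt hsμ hc] at hα
    simp at hα
  have hs₁M : s₁ < M := by
    by_contra hc
    push_neg at hc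
    rw [cdf_one_of_ge hsμ hc] at hβ
    simp at hβ
  have hmt₀ : m ≤ t₀ := by
    by_contra hc
    push_neg at hc
    rw [cdf_zero_of_lt hsν hc] at hα'
    simp at hα'
  have ht₁M : t₁ < M := by
    by_contra hc
    push_neg at hc
    rw [cdf_one_of_ge hsν hc] at hβ'
    simp at hβ'
  have hρR : rhoP m M R ≠ 0 := by
    rw [hR_def, rhoP, Measure.prod_prod, Measure.restrict_apply measurableSet_Ioc,
      Measure.restrict_apply measurableSet_Ioc]
    have he1 : Ioc s₀ s₁ ∩ Ioo m M = Ioc s₀ s₁ :=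
      inter_eq_left.2 fun u hu => ⟨lt_of_le_of_lt hms₀ hu.1, lt_of_le_of_lt hu.2 hs₁M⟩
    have he2 : Ioc t₀ t₁ ∩ Ioo m M = Ioc t₀ t₁ :=
      inter_eq_left.2 fun u hu => ⟨lt_of_le_of_lt hmt₀ hu.1, lt_of_le_of_lt hu.2 ht₁M⟩
    rw [he1, he2, Real.volume_Ioc, Real.volume_Ioc]
    exact mul_ne_zero (ENNReal.ofReal_pos.2 (by linarith)).ne'
      (ENNReal.ofReal_pos.2 (by linarith)).ne'
  have hAntTop : Jl (pAnt μ ν) m ≠ ⊤ := by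
    rw [Jl_eq_ofReal hsμ hsν hCa]
    exact ENNReal.ofReal_ne_top
  have hlt : Jl (pAnt μ ν) m < Jl (pCom μ ν) m :=
    lt_of_lt_of_le (ENNReal.lt_add_right hAntTop
      (mul_ne_zero (ENNReal.ofReal_pos.2 hε).ne' hρR)) hineq
  rw [Jl_eq_ofReal hsμ hsν hCa, Jl_eq_ofReal hsμ hsν hCc] at hlt
  have h0 : 0 ≤ ∫ z, (z.1 - m) * (z.2 - m) ∂(pAnt μ ν) :=
    integral_nonneg_of_ae (shift_nonneg_ae hsμ hsν hCa)
  have h2 := (ENNReal.ofReal_lt_ofReal_iff_of_nonneg h0).1 hlt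
  rw [integral_shift hsμ hsν hCa, integral_shift hsμ hsν hCc] at h2
  linarith

end QOTAux
open QOTAux in
/-- Proposition: type-XY product of two quadratic cost functions. -/
theorem qot_quadratic_product_cost
    (μ ν : Measure ℝ) [IsProbabilityMeasure μ] [IsProbabilityMeasure ν]
    (hμK : ∃ K : Set ℝ, IsCompact K ∧ μ Kᶜ = 0)
    (hνK : ∃ K : Set ℝ, IsCompact K ∧ ν Kᶜ = 0) :
    (∀ f g : ℝ → ℝ → ℝ, IsQuadratic2 f → IsQuadratic2 g →
      ∃ l ∈ Icc (0:ℝ) 1,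
        IsQOTMinimizer (fun z z' => f z.1 z.2 * g z'.1 z'.2) μ ν (pXmix μ ν l)) ∧
    ((¬ ∃ x : ℝ, μ = Measure.dirac x) → (¬ ∃ y : ℝ, ν = Measure.dirac y) →
      ∀ l ∈ Icc (0:ℝ) 1, ∃ f g : ℝ → ℝ → ℝ, IsQuadratic2 f ∧ IsQuadratic2 g ∧
        ∀ l' ∈ Icc (0:ℝ) 1, l' ≠ l →
          qotCost (fun z z' => f z.1 z.2 * g z'.1 z'.2) (pXmix μ ν l) <
            qotCost (fun z z' => f z.1 z.2 * g z'.1 z'.2) (pXmix μ ν l')) := by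
  -- Extract a common compact "support interval" [m, M].
  obtain ⟨K₁, hK₁c, hK₁⟩ := hμK
  obtain ⟨K₂, hK₂c, hK₂⟩ := hνK
  obtain ⟨r₁, hr₁⟩ := hK₁c.isBounded.subset_closedBall 0
  obtain ⟨r₂, hr₂⟩ := hK₂c.isBounded.subset_closedBall 0
  set r : ℝ := max (max r₁ r₂) 1 with hr_def
  have hr1 : (1:ℝ) ≤ r := le_max_right _ _
  set m : ℝ := -r
  set M : ℝ := r
  have hm : m ≤ M := by simp only [m, M]; linarith
  have hsμ : μ (Icc m M)ᶜ = 0 := by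
    refine measure_mono_null (compl_subset_compl.2 fun x hx => ?_) hK₁
    have h := hr₁ hx
    rw [Real.closedBall_eq_Icc] at h
    obtain ⟨h1, h2⟩ := h
    have hr₁r : r₁ ≤ r := le_trans (le_max_left _ _) (le_max_left _ _)
    exact ⟨by simp only [m]; linarith, by simp only [M]; linarith⟩
  have hsν : ν (Icc m M)ᶜ = 0 := by
    refine measure_mono_null (compl_subset_compl.2 fun x hx => ?_) hK₂
    have h := hr₂ hx
    rw [Real.closedBall_eq_Icc] at h
    obtain ⟨h1, h2⟩ := h
    have hr₂r : r₂ ≤ r := le_trans (le_max_right _ _) (le_max_left _ _)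
    exact ⟨by simp only [m]; linarith, by simp only [M]; linarith⟩
  haveI hPc := isProb_pCom hm hsμ hsν
  haveI hPa := isProb_pAnt hm hsμ hsν
  have hCc := isCoupling_pCom hm hsμ hsν
  have hCa := isCoupling_pAnt hm hsμ hsν
  constructor
  · -- Part 1
    rintro f g ⟨af, bf, cf, df, ef, kf, hf⟩ ⟨ag, bg, cg, dg, eg, kg, hg⟩
    set Cf : ℝ := af + bf * (∫ x, x ∂μ) + cf * (∫ y, y ∂ν) + df * (∫ x, x ^ 2 ∂μ)
      + ef * (∫ y, y ^ 2 ∂ν) with hCf_def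
    set Cg : ℝ := ag + bg * (∫ x, x ∂μ) + cg * (∫ y, y ∂ν) + dg * (∫ x, x ^ 2 ∂μ)
      + eg * (∫ y, y ^ 2 ∂ν) with hCg_def
    set q : ℝ → ℝ := fun I => (Cf + kf * I) * (Cg + kg * I) with hq_def
    set A : ℝ := ∫ z, z.1 * z.2 ∂(pAnt μ ν) with hA_def
    set B : ℝ := ∫ z, z.1 * z.2 ∂(pCom μ ν) with hB_def
    have hAB : A ≤ B := I_le_pCom hm hsμ hsν hCa
    have hqc : ContinuousOn q (Icc A B) :=
      (((continuous_const.add (continuous_const.mul continuous_id)).mul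
        (continuous_const.add (continuous_const.mul continuous_id)))).continuousOn
    obtain ⟨ξ, hξI, hξmin⟩ := isCompact_Icc.exists_isMinOn (nonempty_Icc.2 hAB) hqc
    have hlex : ∃ l ∈ Icc (0:ℝ) 1, l * B + (1 - l) * A = ξ := by
      rcases eq_or_lt_of_le hAB with hE | hE
      · refine ⟨0, ⟨le_rfl, zero_le_one⟩, ?_⟩
        have hξA : ξ = A := le_antisymm (by rw [hE]; exact hξI.2) hξI.1
        rw [hξA]; ring
      · have hBA : B - A ≠ 0 := sub_ne_zero.2 (ne_of_gt hE)
        refine ⟨(ξ - A) / (B - A), ⟨div_nonneg (by linarith [hξI.1]) (by linarith), ?_⟩, ?_⟩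
        · rw [div_le_one (by linarith)]; linarith [hξI.2]
        · have h1 : (ξ - A) / (B - A) * (B - A) = ξ - A := div_mul_cancel₀ _ hBA
          have h2 : (ξ - A) / (B - A) * B + (1 - (ξ - A) / (B - A)) * A
              = (ξ - A) / (B - A) * (B - A) + A := by ring
          rw [h2, h1]; ring
    obtain ⟨l, hlmem, hlval⟩ := hlex
    refine ⟨l, hlmem, ?_⟩
    haveI hPx := isProb_pXmix hm hsμ hsν hlmem
    have hCx := isCoupling_pXmix hm hsμ hsν hlmem
    have costEq : ∀ (π : Measure (ℝ × ℝ)), IsProbabilityMeasure π → IsCouplingOf π μ ν →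
        qotCost (fun z z' => f z.1 z.2 * g z'.1 z'.2) π = q (∫ z, z.1 * z.2 ∂π) := by
      intro π hp hc
      haveI := hp
      rw [qotCost_factor (fun z : ℝ × ℝ => f z.1 z.2) (fun z : ℝ × ℝ => g z.1 z.2) π]
      have h1 : ∫ z, f z.1 z.2 ∂π = Cf + kf * ∫ z, z.1 * z.2 ∂π := by
        rw [show (fun z : ℝ × ℝ => f z.1 z.2) = fun z : ℝ × ℝ =>
          af + bf * z.1 + cf * z.2 + df * z.1 ^ 2 + ef * z.2 ^ 2 + kf * (z.1 * z.2) from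
          funext fun z => (hf z.1 z.2).trans (by ring)]
        exact integral_quadratic hsμ hsν hc af bf cf df ef kf
      have h2 : ∫ z, g z.1 z.2 ∂π = Cg + kg * ∫ z, z.1 * z.2 ∂π := by
        rw [show (fun z : ℝ × ℝ => g z.1 z.2) = fun z : ℝ × ℝ =>
          ag + bg * z.1 + cg * z.2 + dg * z.1 ^ 2 + eg * z.2 ^ 2 + kg * (z.1 * z.2) from
          funext fun z => (hg z.1 z.2).trans (by ring)]
        exact integral_quadratic hsμ hsν hc ag bg cg dg eg kg
      rw [h1, h2]
    refine ⟨hPx, hCx, fun π' hπ' hc' => ?_⟩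
    rw [costEq _ hPx hCx, costEq _ hπ' hc']
    have hIx : ∫ z, z.1 * z.2 ∂(pXmix μ ν l) = ξ := by
      rw [I_pXmix hm hsμ hsν hlmem]; exact hlval
    rw [hIx]
    have hI' : ∫ z, z.1 * z.2 ∂π' ∈ Icc A B :=
      ⟨pAnt_le_I hm hsμ hsν hc', I_le_pCom hm hsμ hsν hc'⟩
    exact isMinOn_iff.1 hξmin _ hI'
  · -- Part 2
    intro hndμ hndν l hl
    set A : ℝ := ∫ z, z.1 * z.2 ∂(pAnt μ ν) with hA_def
    set B : ℝ := ∫ z, z.1 * z.2 ∂(pCom μ ν) with hB_def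
    have hAB : A < B := I_ant_lt_com hm hsμ hsν hndμ hndν
    set c0 : ℝ := l * B + (1 - l) * A with hc0_def
    refine ⟨fun x y => x * y - c0, fun x y => x * y - c0,
      ⟨-c0, 0, 0, 0, 0, 1, fun x y => by ring⟩,
      ⟨-c0, 0, 0, 0, 0, 1, fun x y => by ring⟩, ?_⟩
    intro l' hl' hne
    have costEq : ∀ t, t ∈ Icc (0:ℝ) 1 →
        qotCost (fun z z' : ℝ × ℝ => (z.1 * z.2 - c0) * (z'.1 * z'.2 - c0)) (pXmix μ ν t)
          = ((t - l) * (B - A)) ^ 2 := by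
      intro t ht
      haveI := isProb_pXmix hm hsμ hsν ht
      have hct := isCoupling_pXmix hm hsμ hsν ht
      rw [qotCost_factor (fun z : ℝ × ℝ => z.1 * z.2 - c0)
        (fun z : ℝ × ℝ => z.1 * z.2 - c0) (pXmix μ ν t)]
      have hint : ∫ z, (z.1 * z.2 - c0) ∂(pXmix μ ν t) = (t - l) * (B - A) := by
        rw [integral_sub (int_xy hsμ hsν hct) (integrable_const _), integral_const,
          I_pXmix hm hsμ hsν ht]
        simp only [measure_univ, probReal_univ, ENNReal.toReal_one, one_smul]
        rw [hc0_def]; ring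
      rw [hint]; ring
    show qotCost (fun z z' : ℝ × ℝ => (z.1 * z.2 - c0) * (z'.1 * z'.2 - c0)) (pXmix μ ν l)
        < qotCost (fun z z' : ℝ × ℝ => (z.1 * z.2 - c0) * (z'.1 * z'.2 - c0)) (pXmix μ ν l')
    rw [costEq l hl, costEq l' hl']
    have hne0 : (l' - l) * (B - A) ≠ 0 :=
      mul_ne_zero (sub_ne_zero.2 hne) (sub_ne_zero.2 (ne_of_gt hAB))
    calc ((l - l) * (B - A)) ^ 2 = 0 := by ring
      _ < ((l' - l) * (B - A)) ^ 2 :=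
        lt_of_le_of_ne (sq_nonneg _) (Ne.symm (pow_ne_zero 2 hne0))
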